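/- For even n ≥ 2, deleting the four vertices (n/2,1), (n/2,2), (n/2+1,2), (n/2+1,3) from the triangulated grid T_{n,3} leaves exactly two connected components, and the 180-degree rotation (i,j) ↦ (n+1-i, 4-j) restricts to a graph isomorphism between them. -/

import Mathlib

/-- The underlying relation of the triangulated grid: horizontal, vertical and
(same-direction) diagonal steps.  Vertices are `0`-indexed, so `(i, j)` here
corresponds to the vertex `(i+1, j+1)` of the paper. -/
def gridRel (n m : ℕ) (a b : Fin n × Fin m) : Prop :=
  ((a.1 : ℕ) + 1 = (b.1 : ℕ) ∧ a.2 = b.2) ∨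
  (a.1 = b.1 ∧ (a.2 : ℕ) + 1 = (b.2 : ℕ)) ∨
  ((a.1 : ℕ) + 1 = (b.1 : ℕ) ∧ (a.2 : ℕ) + 1 = (b.2 : ℕ))

/-- The triangulated Cartesian product `T_{n,m} = Pₙ ⧄ Pₘ` of two paths. -/
def triGrid (n m : ℕ) : SimpleGraph (Fin n × Fin m) :=
  SimpleGraph.fromRel (gridRel n m)

/-- The four deleted vertices `(n/2,1), (n/2,2), (n/2+1,2), (n/2+1,3)` of the
paper, in our `0`-indexed coordinates. -/
def deleted10 (n : ℕ) (x : Fin n × Fin 3) : Prop :=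
  ((x.1 : ℕ) + 1 = n / 2 ∧ ((x.2 : ℕ) = 0 ∨ (x.2 : ℕ) = 1)) ∨
  ((x.1 : ℕ) = n / 2 ∧ ((x.2 : ℕ) = 1 ∨ (x.2 : ℕ) = 2))

namespace TriSplit

open SimpleGraph

/-- The surviving vertex set. -/
abbrev S (n : ℕ) : Set (Fin n × Fin 3) := {x | ¬ deleted10 n x}

/-- The induced graph on the surviving vertices. -/
abbrev G (n : ℕ) : SimpleGraph (S n) := (triGrid n 3).induce (S n)

/-- Membership in the right-hand component. -/
def inR (n : ℕ) (x : Fin n × Fin 3) : Prop :=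
  n / 2 + 1 ≤ (x.1 : ℕ) ∨ ((x.1 : ℕ) = n / 2 ∧ (x.2 : ℕ) = 0)

instance (n : ℕ) : DecidablePred (inR n) := fun _ => by unfold inR; infer_instance

/-- Convenient constructor for vertices. -/
def vtx (n : ℕ) (i j : ℕ) (hi : i < n) (hj : j < 3) : Fin n × Fin 3 := (⟨i, hi⟩, ⟨j, hj⟩)

lemma reach_step {n : ℕ} {a b : Fin n × Fin 3} (ha : a ∈ S n) (hb : b ∈ S n)
    (hne : a ≠ b) (h : gridRel n 3 a b ∨ gridRel n 3 b a) :
    (G n).Reachable ⟨a, ha⟩ ⟨b, hb⟩ := by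
  apply SimpleGraph.Adj.reachable
  show (triGrid n 3).Adj a b
  rw [triGrid, SimpleGraph.fromRel_adj]
  exact ⟨hne, h⟩

lemma mem_i2 {k i : ℕ} (hk : 1 ≤ k) (hi : i < k) :
    vtx (2 * k) i 2 (by omega) (by omega) ∈ S (2 * k) := by
  simp only [S, vtx, Set.mem_setOf_eq, deleted10]
  simp only [not_or]
  omega

/-- Reach `(k-1, 2)` from `(i, 2)` along row 2. -/
lemma reach_row2 {k : ℕ} (hk : 1 ≤ k) :
    ∀ d i (hik : i + d + 1 = k),
      (G (2 * k)).Reachable ⟨vtx (2 * k) i 2 (by omega) (by omega), mem_i2 hk (by omega)⟩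
        ⟨vtx (2 * k) (k - 1) 2 (by omega) (by omega), mem_i2 hk (by omega)⟩ := by
  intro d
  induction d with
  | zero =>
    intro i hik
    obtain rfl : i = k - 1 := by omega
    exact SimpleGraph.Reachable.refl _
  | succ d ih =>
    intro i hik
    refine (reach_step (mem_i2 hk (by omega)) (mem_i2 hk (by omega)) ?_ ?_).trans
      (ih (i + 1) (by omega))
    · simp [vtx, Prod.ext_iff, Fin.ext_iff]
    · left; left
      simp [vtx, gridRel]

lemma mem_ij {k i j : ℕ} (hi2 : i + 2 ≤ k) (hj : j < 3) :
    vtx (2 * k) i j (by omega) hj ∈ S (2 * k) := by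
  simp only [S, vtx, Set.mem_setOf_eq, deleted10]
  simp only [not_or]
  omega

/-- Every surviving vertex not in `R` reaches the anchor `(k-1,2)`. -/
lemma reach_anchor {k : ℕ} (hk : 1 ≤ k) (x : Fin (2 * k) × Fin 3) (hx : x ∈ S (2 * k))
    (hL : ¬ inR (2 * k) x) :
    (G (2 * k)).Reachable ⟨x, hx⟩
      ⟨vtx (2 * k) (k - 1) 2 (by omega) (by omega), mem_i2 hk (by omega)⟩ := by
  obtain ⟨⟨i, hi⟩, ⟨j, hj⟩⟩ := x
  have hdel : ¬ deleted10 (2 * k) (⟨i, hi⟩, ⟨j, hj⟩) := hx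
  simp only [deleted10, inR, not_or] at hdel hL
  have hcase : (i + 2 ≤ k) ∨ (i + 1 = k ∧ j = 2) := by omega
  rcases hcase with hcase | ⟨hcase1, hcase2⟩
  · -- go vertically to (i, 2), then along row 2
    have hrow : (G (2 * k)).Reachable
        ⟨vtx (2 * k) i 2 (by omega) (by omega), mem_i2 hk (by omega)⟩
        ⟨vtx (2 * k) (k - 1) 2 (by omega) (by omega), mem_i2 hk (by omega)⟩ :=
      reach_row2 hk (k - 1 - i) i (by omega)
    have step01 : ∀ (j' : ℕ) (hj' : j' + 1 < 3),
        (G (2 * k)).Reachable ⟨vtx (2 * k) i j' (by omega) (by omega), mem_ij hcase (by omega)⟩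
          ⟨vtx (2 * k) i (j' + 1) (by omega) hj', mem_ij hcase hj'⟩ := by
      intro j' hj'
      refine reach_step _ _ ?_ ?_
      · simp [vtx, Prod.ext_iff, Fin.ext_iff]
      · left; right; left
        simp [vtx, gridRel]
    interval_cases j
    · exact ((step01 0 (by omega)).trans (step01 1 (by omega))).trans hrow
    · exact (step01 1 (by omega)).trans hrow
    · exact hrow
  · obtain rfl : j = 2 := hcase2
    obtain rfl : i = k - 1 := by omega
    exact SimpleGraph.Reachable.refl _

/-- The 180 degree rotation. -/
def rot (n : ℕ) (x : Fin n × Fin 3) : Fin n × Fin 3 := (x.1.rev, x.2.rev)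

lemma rot_rot {n : ℕ} (x : Fin n × Fin 3) : rot n (rot n x) = x := by
  simp [rot]

lemma rot_mem {k : ℕ} {x : Fin (2 * k) × Fin 3} (hx : x ∈ S (2 * k)) :
    rot (2 * k) x ∈ S (2 * k) := by
  obtain ⟨⟨i, hi⟩, ⟨j, hj⟩⟩ := x
  have hdel : ¬ deleted10 (2 * k) (⟨i, hi⟩, ⟨j, hj⟩) := hx
  simp only [deleted10, not_or, rot, S, Set.mem_setOf_eq, Fin.val_rev] at hdel ⊢
  omega

set_option maxHeartbeats 1000000 in
lemma rot_adj {k : ℕ} {x y : Fin (2 * k) × Fin 3} :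
    (triGrid (2 * k) 3).Adj (rot (2 * k) x) (rot (2 * k) y) ↔ (triGrid (2 * k) 3).Adj x y := by
  obtain ⟨⟨i1, hi1⟩, ⟨j1, hj1⟩⟩ := x
  obtain ⟨⟨i2, hi2⟩, ⟨j2, hj2⟩⟩ := y
  simp only [triGrid, SimpleGraph.fromRel_adj, gridRel, rot, ne_eq, Prod.ext_iff,
    Fin.ext_iff, Fin.val_rev]
  omega

/-- The rotation as a graph automorphism of the induced graph. -/
def E (k : ℕ) : G (2 * k) ≃g G (2 * k) where
  toFun x := ⟨rot (2 * k) x.1, rot_mem x.2⟩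
  invFun x := ⟨rot (2 * k) x.1, rot_mem x.2⟩
  left_inv x := Subtype.ext (rot_rot x.1)
  right_inv x := Subtype.ext (rot_rot x.1)
  map_rel_iff' := @fun a b => rot_adj

lemma inR_rot {k : ℕ} {x : Fin (2 * k) × Fin 3} (hx : x ∈ S (2 * k)) :
    inR (2 * k) (rot (2 * k) x) ↔ ¬ inR (2 * k) x := by
  obtain ⟨⟨i, hi⟩, ⟨j, hj⟩⟩ := x
  have hdel : ¬ deleted10 (2 * k) (⟨i, hi⟩, ⟨j, hj⟩) := hx
  simp only [deleted10, not_or, inR, rot, Fin.val_rev] at hdel ⊢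
  omega

/-- side of a surviving vertex. -/
def sideB (n : ℕ) (x : S n) : Bool := decide (inR n x.1)

lemma side_adj {k : ℕ} {a b : S (2 * k)} (h : (G (2 * k)).Adj a b) :
    sideB (2 * k) a = sideB (2 * k) b := by
  have hadj : (triGrid (2 * k) 3).Adj a.1 b.1 := h
  have ha := a.2
  have hb := b.2
  simp only [sideB, decide_eq_decide, inR]
  obtain ⟨⟨⟨i1, hi1⟩, ⟨j1, hj1⟩⟩, _⟩ := a
  obtain ⟨⟨⟨i2, hi2⟩, ⟨j2, hj2⟩⟩, _⟩ := b
  simp only [triGrid, SimpleGraph.fromRel_adj, gridRel, ne_eq, Prod.ext_iff,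
    Fin.ext_iff] at hadj
  simp only [S, Set.mem_setOf_eq, deleted10, not_or] at ha hb
  apply decide_eq_decide.mpr
  dsimp only
  omega

lemma side_walk {k : ℕ} : ∀ {a b : S (2 * k)} (_ : (G (2 * k)).Walk a b),
    sideB (2 * k) a = sideB (2 * k) b := by
  intro a b p
  induction p with
  | nil => rfl
  | cons h _ ih => exact (side_adj h).trans ih

/-- the component classifier. -/
def phi (k : ℕ) : (G (2 * k)).ConnectedComponent → Bool :=
  SimpleGraph.ConnectedComponent.lift (sideB (2 * k)) (fun _ _ p _ => side_walk p)

lemma phi_bij {k : ℕ} (hk : 1 ≤ k) : Function.Bijective (phi k) := by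
  constructor
  · intro c d
    refine SimpleGraph.ConnectedComponent.ind₂ (fun x y h => ?_) c d
    simp only [phi, SimpleGraph.ConnectedComponent.lift_mk, sideB, decide_eq_decide] at h
    rw [SimpleGraph.ConnectedComponent.eq]
    by_cases hx : inR (2 * k) x.1
    · have hy : inR (2 * k) y.1 := h.mp hx
      -- rotate into the left part
      have h1 : ¬ inR (2 * k) (rot (2 * k) x.1) := by rw [inR_rot x.2]; simpa
      have h2 : ¬ inR (2 * k) (rot (2 * k) y.1) := by rw [inR_rot y.2]; simpa
      have hr : (G (2 * k)).Reachable (E k x) (E k y) :=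
        (reach_anchor hk _ (rot_mem x.2) h1).trans (reach_anchor hk _ (rot_mem y.2) h2).symm
      have hmap := hr.map (E k).symm.toHom
      have ex : (E k).symm.toHom ((E k) x) = x := Subtype.ext (rot_rot x.1)
      have ey : (E k).symm.toHom ((E k) y) = y := Subtype.ext (rot_rot y.1)
      rwa [ex, ey] at hmap
    · have hy : ¬ inR (2 * k) y.1 := fun hy => hx (h.mpr hy)
      exact (reach_anchor hk _ x.2 hx).trans (reach_anchor hk _ y.2 hy).symm
  · intro b
    cases b with
    | false =>
      refine ⟨(G (2 * k)).connectedComponentMk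
        ⟨vtx (2 * k) (k - 1) 2 (by omega) (by omega), mem_i2 hk (by omega)⟩, ?_⟩
      simp only [phi, SimpleGraph.ConnectedComponent.lift_mk, sideB, vtx,
        decide_eq_false_iff_not, inR]
      exact decide_eq_false (by omega)
    | true =>
      have hmem : vtx (2 * k) k 0 (by omega) (by omega) ∈ S (2 * k) := by
        simp only [S, vtx, Set.mem_setOf_eq, deleted10, not_or]
        omega
      refine ⟨(G (2 * k)).connectedComponentMk ⟨vtx (2 * k) k 0 (by omega) (by omega), hmem⟩, ?_⟩
      simp only [phi, SimpleGraph.ConnectedComponent.lift_mk, sideB, vtx,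
        decide_eq_true_eq, inR]
      exact Or.inr ⟨by omega, trivial⟩

end TriSplit

/-- For even `n ≥ 2`, deleting the vertices `(n/2,1), (n/2,2), (n/2+1,2),
(n/2+1,3)` from `T_{n,3}` leaves exactly two connected components, and the
180-degree rotation `(i,j) ↦ (n+1-i, 4-j)` restricts to a graph isomorphism
of the remaining graph that interchanges the two components. -/
theorem triGrid3_even_split (n : ℕ) (hn : 2 ≤ n) (heven : Even n) :
    Nat.card ((triGrid n 3).induce {x | ¬ deleted10 n x}).ConnectedComponent = 2 ∧
    ∃ e : (triGrid n 3).induce {x | ¬ deleted10 n x} ≃g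
          (triGrid n 3).induce {x | ¬ deleted10 n x},
      (∀ x, (e x : Fin n × Fin 3) =
        ((x : Fin n × Fin 3).1.rev, (x : Fin n × Fin 3).2.rev)) ∧
      ∀ x, ((triGrid n 3).induce {x | ¬ deleted10 n x}).connectedComponentMk (e x) ≠
        ((triGrid n 3).induce {x | ¬ deleted10 n x}).connectedComponentMk x := by
  obtain ⟨k, rfl⟩ : ∃ k, n = 2 * k := by
    obtain ⟨k, hk⟩ := heven; exact ⟨k, by omega⟩
  have hk : 1 ≤ k := by omega
  refine ⟨?_, TriSplit.E k, fun x => rfl, ?_⟩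
  · rw [Nat.card_eq_of_bijective _ (TriSplit.phi_bij hk)]
    simp
  · intro x h
    have := congrArg (TriSplit.phi k) h
    simp only [TriSplit.phi, SimpleGraph.ConnectedComponent.lift_mk, TriSplit.sideB,
      decide_eq_decide] at this
    have hflip := TriSplit.inR_rot x.2
    have : TriSplit.inR (2 * k) (TriSplit.rot (2 * k) x.1) ↔ TriSplit.inR (2 * k) x.1 := this
    tauto
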